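/- Let ξ : (0,∞) → (0,1) be defined implicitly by log x = ψ(x + ξ(x)). Then lim_{x→∞} ξ(x) = 1/2. -/

import Mathlib

noncomputable def digamma : ℝ → ℝ := deriv (fun y : ℝ => Real.log (Real.Gamma y))

open Real Finset


lemma hasDerivAt_logGamma {y : ℝ} (hy : 0 < y) :
    HasDerivAt (fun t : ℝ => Real.log (Real.Gamma t)) (digamma y) y := by
  have hd : DifferentiableAt ℝ Real.Gamma y := by
    refine Real.differentiableAt_Gamma (fun m => ?_)
    have : (0:ℝ) ≤ m := Nat.cast_nonneg m
    intro h; rw [h] at hy; linarith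
  have h2 : HasDerivAt (fun t : ℝ => Real.log (Real.Gamma t))
      (deriv Real.Gamma y / Real.Gamma y) y :=
    hd.hasDerivAt.log (Real.Gamma_pos_of_pos hy).ne'
  have h3 : digamma y = deriv Real.Gamma y / Real.Gamma y := h2.deriv
  rw [h3]; exact h2

lemma slope_logGamma {y : ℝ} (hy : 0 < y) :
    slope (Real.log ∘ Real.Gamma) y (y + 1) = Real.log y := by
  rw [slope_def_field]
  simp only [Function.comp_apply]
  rw [Real.Gamma_add_one hy.ne', Real.log_mul hy.ne' (Real.Gamma_pos_of_pos hy).ne']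
  ring

lemma digamma_le_log {y : ℝ} (hy : 0 < y) : digamma y ≤ Real.log y := by
  have hs := Real.convexOn_log_Gamma.le_slope_of_hasDerivAt (Set.mem_Ioi.mpr hy)
    (Set.mem_Ioi.mpr (by linarith : (0:ℝ) < y + 1)) (lt_add_one y)
    (f' := digamma y) (hasDerivAt_logGamma hy)
  rwa [slope_logGamma hy] at hs

lemma log_le_digamma_add_one {y : ℝ} (hy : 0 < y) : Real.log y ≤ digamma (y + 1) := by
  have hs := Real.convexOn_log_Gamma.slope_le_of_hasDerivAt (Set.mem_Ioi.mpr hy)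
    (Set.mem_Ioi.mpr (by linarith : (0:ℝ) < y + 1)) (lt_add_one y)
    (f' := digamma (y + 1)) (hasDerivAt_logGamma (by linarith))
  rwa [slope_logGamma hy] at hs

lemma digamma_add_one {y : ℝ} (hy : 0 < y) : digamma (y + 1) = digamma y + 1 / y := by
  have h2 : HasDerivAt (fun t : ℝ => Real.log (Real.Gamma (t + 1))) (digamma (y + 1)) y := by
    have := (hasDerivAt_logGamma (by linarith : (0:ℝ) < y + 1)).comp y
      ((hasDerivAt_id y).add_const 1)
    simpa [Function.comp_def] using this
  have h3 : HasDerivAt (fun t : ℝ => Real.log t + Real.log (Real.Gamma t))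
      (1 / y + digamma y) y := by
    simpa [one_div, Pi.add_def] using (Real.hasDerivAt_log hy.ne').add (hasDerivAt_logGamma hy)
  have heq : (fun t : ℝ => Real.log (Real.Gamma (t + 1)))
      =ᶠ[nhds y] fun t => Real.log t + Real.log (Real.Gamma t) := by
    filter_upwards [eventually_gt_nhds hy] with t ht
    rw [Real.Gamma_add_one ht.ne', Real.log_mul ht.ne' (Real.Gamma_pos_of_pos ht).ne']
  have h4 : HasDerivAt (fun t : ℝ => Real.log t + Real.log (Real.Gamma t))
      (digamma (y + 1)) y := by
    exact h2.congr_of_eventuallyEq heq.symm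
  have := h4.unique h3
  linarith



lemma le_log_one_add {u : ℝ} (hu : 0 ≤ u) : u - u^2/2 ≤ Real.log (1 + u) := by
  set f : ℝ → ℝ := fun t => Real.log (1 + t) - t + t^2/2 with hf
  have hder : ∀ t : ℝ, 0 < t → HasDerivAt f (1/(1+t) - 1 + t) t := by
    intro t ht
    have h1t : (1:ℝ) + t ≠ 0 := by linarith
    have hl : HasDerivAt (fun s : ℝ => Real.log (1 + s)) (1/(1+t)) t := by
      have := (Real.hasDerivAt_log h1t).comp t ((hasDerivAt_id t).const_add 1)
      simpa [one_div, Function.comp_def] using this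
    have hp : HasDerivAt (fun s : ℝ => s^2/2) t t := by
      have := (hasDerivAt_pow 2 t).div_const 2
      simpa using this
    simpa [hf, Pi.add_def, Pi.sub_def] using (hl.sub (hasDerivAt_id t)).add hp
  have hcont : ContinuousOn f (Set.Ici 0) := by
    intro t ht
    simp only [Set.mem_Ici] at ht
    have h1t : (1:ℝ) + t ≠ 0 := by linarith
    have hl : ContinuousAt (fun s : ℝ => Real.log (1 + s)) t :=
      (Real.continuousAt_log h1t).comp (by fun_prop)
    exact ((hl.sub continuousAt_id).add ((continuousAt_id.pow 2).div_const 2)).continuousWithinAt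
  have hmono : MonotoneOn f (Set.Ici 0) := by
    refine monotoneOn_of_deriv_nonneg (convex_Ici 0) hcont ?_ ?_
    · intro t ht
      rw [interior_Ici] at ht
      exact (hder t ht).differentiableAt.differentiableWithinAt
    · intro t ht
      rw [interior_Ici] at ht
      simp only [Set.mem_Ioi] at ht
      rw [(hder t ht).deriv]
      have h1t : (0:ℝ) < 1 + t := by linarith
      have key : 1/(1+t) - 1 + t = t^2/(1+t) := by field_simp; ring
      rw [key]; positivity
  have h0 : f 0 ≤ f u := hmono (by simp) hu hu
  simp [hf] at h0
  linarith

lemma log_one_add_le_cubic {u : ℝ} (hu : 0 ≤ u) :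
    Real.log (1 + u) ≤ u - u^2/2 + u^3/3 := by
  set f : ℝ → ℝ := fun t => t - t^2/2 + t^3/3 - Real.log (1 + t) with hf
  have hder : ∀ t : ℝ, 0 < t → HasDerivAt f (1 - t + t^2 - 1/(1+t)) t := by
    intro t ht
    have h1t : (1:ℝ) + t ≠ 0 := by linarith
    have hl : HasDerivAt (fun s : ℝ => Real.log (1 + s)) (1/(1+t)) t := by
      have := (Real.hasDerivAt_log h1t).comp t ((hasDerivAt_id t).const_add 1)
      simpa [one_div, Function.comp_def] using this
    have hp2 : HasDerivAt (fun s : ℝ => s^2/2) t t := by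
      have := (hasDerivAt_pow 2 t).div_const 2
      simpa using this
    have hp3 : HasDerivAt (fun s : ℝ => s^3/3) (t^2) t := by
      have h := (hasDerivAt_pow 3 t).div_const 3
      refine h.congr_deriv ?_
      push_cast
      ring
    simpa [hf, Pi.add_def, Pi.sub_def] using (((hasDerivAt_id t).sub hp2).add hp3).sub hl
  have hcont : ContinuousOn f (Set.Ici 0) := by
    intro t ht
    simp only [Set.mem_Ici] at ht
    have h1t : (1:ℝ) + t ≠ 0 := by linarith
    have hl : ContinuousAt (fun s : ℝ => Real.log (1 + s)) t :=
      (Real.continuousAt_log h1t).comp (by fun_prop)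
    exact (((continuousAt_id.sub ((continuousAt_id.pow 2).div_const 2)).add
      ((continuousAt_id.pow 3).div_const 3)).sub hl).continuousWithinAt
  have hmono : MonotoneOn f (Set.Ici 0) := by
    refine monotoneOn_of_deriv_nonneg (convex_Ici 0) hcont ?_ ?_
    · intro t ht
      rw [interior_Ici] at ht
      exact (hder t ht).differentiableAt.differentiableWithinAt
    · intro t ht
      rw [interior_Ici] at ht
      simp only [Set.mem_Ioi] at ht
      rw [(hder t ht).deriv]
      have h1t : (0:ℝ) < 1 + t := by linarith
      have key : 1 - t + t^2 - 1/(1+t) = t^3/(1+t) := by field_simp; ring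
      rw [key]; positivity
  have h0 : f 0 ≤ f u := hmono (by simp) hu hu
  simp [hf] at h0
  linarith

lemma log_one_add_le {u : ℝ} (hu : 0 ≤ u) : Real.log (1 + u) ≤ u := by
  have := Real.log_le_sub_one_of_pos (show (0:ℝ) < 1 + u by linarith)
  linarith

noncomputable def dterm (t : ℝ) : ℝ := 1/t - (Real.log (t + 1) - Real.log t)

lemma dterm_bounds {t : ℝ} (ht : 0 < t) :
    1/(2*t^2) - 1/(3*t^3) ≤ dterm t ∧ dterm t ≤ 1/(2*t^2) := by
  have hlog : Real.log (t + 1) - Real.log t = Real.log (1 + 1/t) := by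
    rw [show (1:ℝ) + 1/t = (t+1)/t by field_simp, Real.log_div (by linarith) ht.ne']
  have hu : (0:ℝ) ≤ 1/t := by positivity
  have h1 := le_log_one_add hu
  have h2 := log_one_add_le_cubic hu
  have e2 : (1/t)^2 = 1/t^2 := by rw [div_pow]; norm_num
  have e3 : (1/t)^3 = 1/t^3 := by rw [div_pow]; norm_num
  rw [e2] at h1 h2
  rw [e3] at h2
  have q2 : 1/(2*t^2) = (1/t^2)/2 := by ring
  have q3 : 1/(3*t^3) = (1/t^3)/3 := by ring
  constructor <;> (simp only [dterm, hlog, q2, q3]; linarith)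


lemma tele {y : ℝ} (hy : 0 < y) (n : ℕ) :
    digamma (y + n) - Real.log (y + n) =
      (digamma y - Real.log y) + ∑ k ∈ Finset.range n, dterm (y + k) := by
  induction n with
  | zero => simp
  | succ n ih =>
    have hyn : 0 < y + (n:ℝ) := by positivity
    have h1 := digamma_add_one hyn
    have hc : y + ((n:ℕ)+1 : ℕ) = (y + (n:ℝ)) + 1 := by push_cast; ring
    rw [Finset.sum_range_succ, hc, h1]
    have hd : dterm (y + (n:ℝ)) =
        1/(y + (n:ℝ)) - (Real.log (y + (n:ℝ) + 1) - Real.log (y + (n:ℝ))) := rfl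
    rw [hd]
    linarith

lemma sum_sq_le {y : ℝ} (hy : 1 ≤ y) (n : ℕ) :
    ∑ k ∈ Finset.range n, 1/(y + k)^2 ≤ 1/y^2 + 1/y := by
  have hy0 : 0 < y := by linarith
  have key : ∀ m : ℕ, ∑ k ∈ Finset.range (m+1), 1/(y + k)^2 ≤ 1/y^2 + 1/y - 1/(y + m) := by
    intro m
    induction m with
    | zero => simp
    | succ m ih =>
      rw [Finset.sum_range_succ]
      have hym : (0:ℝ) < y + m := by positivity
      have hstep : 1/(y + ((m:ℕ)+1:ℕ))^2 ≤ 1/(y + m) - 1/(y + ((m:ℕ)+1:ℕ)) := by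
        push_cast
        rw [div_sub_div _ _ (by positivity) (by positivity : (0:ℝ) < y + ((m:ℝ)+1)).ne']
        rw [div_le_div_iff₀ (by positivity) (by positivity)]
        nlinarith [hym]
      push_cast at ih hstep ⊢
      linarith
  cases n with
  | zero => simp; positivity
  | succ m =>
    have h := key m
    have : (0:ℝ) < y + m := by positivity
    have h2 : (0:ℝ) ≤ 1/(y+m) := by positivity
    linarith

lemma sum_sq_ge {y : ℝ} (hy : 1 ≤ y) (n : ℕ) :
    1/y - 1/(y + n) ≤ ∑ k ∈ Finset.range n, 1/(y + k)^2 := by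
  have hy0 : 0 < y := by linarith
  induction n with
  | zero => simp
  | succ n ih =>
    rw [Finset.sum_range_succ]
    have hyn : (0:ℝ) < y + n := by positivity
    have hstep : 1/(y + n) - 1/(y + ((n:ℕ)+1:ℕ)) ≤ 1/(y + n)^2 := by
      push_cast
      rw [div_sub_div _ _ hyn.ne' (by positivity : (0:ℝ) < y + ((n:ℝ)+1)).ne']
      rw [div_le_div_iff₀ (by positivity) (by positivity)]
      nlinarith [hyn]
    push_cast at ih hstep ⊢
    linarith

lemma sum_cube_le {y : ℝ} (hy : 1 ≤ y) (n : ℕ) :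
    ∑ k ∈ Finset.range n, 1/(y + k)^3 ≤ (1/y) * (1/y^2 + 1/y) := by
  have hy0 : 0 < y := by linarith
  have h1 : ∑ k ∈ Finset.range n, 1/(y + k)^3 ≤ ∑ k ∈ Finset.range n, (1/y) * (1/(y + k)^2) := by
    refine Finset.sum_le_sum fun k _ => ?_
    have hyk : (0:ℝ) < y + k := by positivity
    have hk0 : (0:ℝ) ≤ k := Nat.cast_nonneg k
    rw [one_div_mul_one_div]
    exact one_div_le_one_div_of_le (by positivity) (by nlinarith)
  rw [← Finset.mul_sum] at h1
  exact h1.trans (mul_le_mul_of_nonneg_left (sum_sq_le hy n) (by positivity))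


lemma digamma_asymp {y : ℝ} (hy : 1 ≤ y) :
    |digamma y - Real.log y + 1/(2*y)| ≤ 2/y^2 := by
  have hy0 : 0 < y := by linarith
  obtain ⟨n, hn⟩ := exists_nat_ge (y^2 + 1)
  have hyn : (0:ℝ) < y + n := by positivity
  have hy2 : (0:ℝ) < y^2 := by positivity
  have hn1 : y^2 ≤ y + n - 1 := by nlinarith
  have hn1' : (0:ℝ) < y + n - 1 := by nlinarith
  -- tail bounds
  have hT1 : digamma (y + n) - Real.log (y + n) ≤ 0 := by
    have := digamma_le_log hyn; linarith
  have hT2 : -(1/y^2) ≤ digamma (y + n) - Real.log (y + n) := by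
    have h1 : Real.log (y + n - 1) ≤ digamma (y + n) := by
      have := log_le_digamma_add_one hn1'
      rwa [sub_add_cancel] at this
    have h3 : Real.log (1 + 1/(y + n - 1)) = Real.log (y + n) - Real.log (y + n - 1) := by
      rw [show (1:ℝ) + 1/(y + n - 1) = (y + n)/(y + n - 1) by field_simp; ring]
      rw [Real.log_div hyn.ne' hn1'.ne']
    have h2 : Real.log (y + n) - Real.log (y + n - 1) ≤ 1/(y + n - 1) := by
      rw [← h3]
      have := log_one_add_le (le_of_lt (by positivity : (0:ℝ) < 1/(y + n - 1)))
      linarith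
    have h4 : 1/(y + n - 1) ≤ 1/y^2 := one_div_le_one_div_of_le hy2 hn1
    linarith
  -- sum bounds
  set S := ∑ k ∈ Finset.range n, dterm (y + k) with hS
  have half : ∀ t : ℝ, 1/(2*t^2) = (1/2) * (1/t^2) := fun t => by
    rw [div_mul_div_comm, one_mul]
  have third : ∀ t : ℝ, 1/(3*t^3) = (1/3) * (1/t^3) := fun t => by
    rw [div_mul_div_comm, one_mul]
  have hSle : S ≤ (1/2) * (1/y^2 + 1/y) := by
    have h1 : S ≤ ∑ k ∈ Finset.range n, (1/2) * (1/(y + k)^2) := by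
      refine Finset.sum_le_sum fun k _ => ?_
      have := (dterm_bounds (by positivity : (0:ℝ) < y + k)).2
      rwa [half] at this
    rw [← Finset.mul_sum] at h1
    exact h1.trans (mul_le_mul_of_nonneg_left (sum_sq_le hy n) (by norm_num))
  have hSge : (1/2) * (1/y - 1/(y + n)) - (1/3) * ((1/y) * (1/y^2 + 1/y)) ≤ S := by
    have h1 : ∑ k ∈ Finset.range n, ((1/2) * (1/(y + k)^2) - (1/3) * (1/(y + k)^3)) ≤ S := by
      refine Finset.sum_le_sum fun k _ => ?_
      have := (dterm_bounds (by positivity : (0:ℝ) < y + k)).1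
      rwa [half, third] at this
    rw [Finset.sum_sub_distrib, ← Finset.mul_sum, ← Finset.mul_sum] at h1
    have h3 := sum_sq_ge hy n
    have h4 := sum_cube_le hy n
    nlinarith
  -- combine
  have htele := tele hy0 n
  have hf : digamma y - Real.log y = (digamma (y + n) - Real.log (y + n)) - S := by
    rw [htele]; ring
  have hyn2 : 1/(y + n) ≤ 1/y^2 := one_div_le_one_div_of_le hy2 (by nlinarith)
  have hy3 : 1/y^3 ≤ 1/y^2 := by
    apply one_div_le_one_div_of_le hy2
    nlinarith
  have e1 : (1/3) * ((1/y) * (1/y^2 + 1/y)) = (1/3) * (1/y^3) + (1/3) * (1/y^2) := by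
    field_simp
  have hq : 1/(2*y) = (1/2) * (1/y) := by rw [div_mul_div_comm, one_mul]
  have hr : 2/y^2 = 2*(1/y^2) := by rw [mul_one_div]
  rw [abs_le, hq, hr]
  constructor <;> linarith

open Filter in
theorem xi_limit (ξ : ℝ → ℝ)
    (hξ : ∀ x : ℝ, 0 < x → ξ x ∈ Set.Ioo (0 : ℝ) 1 ∧ Real.log x = digamma (x + ξ x)) :
    Tendsto ξ atTop (nhds (1 / 2)) := by
  have key : ∀ x : ℝ, 1 ≤ x → 1/2 - 3/x ≤ ξ x ∧ ξ x ≤ 1/2 + 3/x := by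
    intro x hx1
    have hx0 : (0:ℝ) < x := by linarith
    obtain ⟨⟨hs0, hs1⟩, heq⟩ := hξ x hx0
    set s := ξ x with hsdef
    have ht0 : (0:ℝ) < x + s := by linarith
    have ht1 : (1:ℝ) ≤ x + s := by linarith
    have ha := digamma_asymp ht1
    rw [← heq, abs_le] at ha
    -- log (x+s) - log x = log (1 + s/x)
    have hlog : Real.log (1 + s/x) = Real.log (x + s) - Real.log x := by
      rw [show (1:ℝ) + s/x = (x + s)/x by field_simp]
      rw [Real.log_div ht0.ne' hx0.ne']
    have hu0 : (0:ℝ) ≤ s/x := by positivity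
    have hB1 := le_log_one_add hu0
    have hB2 := log_one_add_le hu0
    rw [hlog] at hB1 hB2
    -- P1 : 1/(2(x+s)) - 2/(x+s)^2 ≤ s/x
    have P1 : ((x+s) - 4)/(2*(x+s)^2) ≤ s/x := by
      have e : ((x+s) - 4)/(2*(x+s)^2) = 1/(2*(x+s)) - 2/(x+s)^2 := by
        field_simp; ring
      rw [e]
      linarith
    have P2 : (2*s*x - s^2)/(2*x^2) ≤ ((x+s) + 4)/(2*(x+s)^2) := by
      have e : (2*s*x - s^2)/(2*x^2) = s/x - (s/x)^2/2 := by
        field_simp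
      have e2 : ((x+s) + 4)/(2*(x+s)^2) = 1/(2*(x+s)) + 2/(x+s)^2 := by
        field_simp; ring
      rw [e, e2]
      linarith
    rw [div_le_div_iff₀ (by positivity) hx0] at P1
    rw [div_le_div_iff₀ (by positivity) (by positivity)] at P2
    constructor
    · have e : (1:ℝ)/2 - 3/x = (x - 6)/(2*x) := by field_simp; ring
      rw [e, div_le_iff₀ (by positivity)]
      rcases le_or_gt (1/2 : ℝ) s with h | h
      · nlinarith
      · nlinarith [mul_pos hx0 hx0, mul_pos hs0 (mul_pos hx0 hx0), sq_nonneg s,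
          mul_nonneg (mul_nonneg hs0.le hs0.le) hs0.le]
    · have e : (1:ℝ)/2 + 3/x = (x + 6)/(2*x) := by field_simp; ring
      rw [e, le_div_iff₀ (by positivity)]
      rcases le_or_gt (2*s*x) 1 with h | h
      · nlinarith
      · have h1 : (2*s*x - 1)*x^2 ≤ (2*s*x - s^2)*(x+s)^2 := by
          nlinarith [mul_pos (mul_pos hs0 (show (0:ℝ) < 2*x - s by linarith))
              (mul_pos hs0 (show (0:ℝ) < 2*x + s by linarith)),
            mul_nonneg (show (0:ℝ) ≤ 1 - s^2 by nlinarith) (sq_nonneg x)]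
        have P2' : (2*s*x - s^2)*(x+s)^2 ≤ (x+s+4)*x^2 := by linarith
        have h2 : (2*s*x - 1)*x^2 ≤ (x+s+4)*x^2 := le_trans h1 P2'
        have h3 : 2*s*x - 1 ≤ x+s+4 := (mul_le_mul_iff_left₀ (show (0:ℝ) < x^2 by positivity)).mp h2
        linarith
  have lo : ∀ᶠ x in atTop, 1/2 - 3/x ≤ ξ x :=
    eventually_atTop.2 ⟨1, fun x hx => (key x hx).1⟩
  have hi : ∀ᶠ x in atTop, ξ x ≤ 1/2 + 3/x :=
    eventually_atTop.2 ⟨1, fun x hx => (key x hx).2⟩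
  have h3 : Tendsto (fun x : ℝ => 3/x) atTop (nhds 0) :=
    tendsto_const_nhds.div_atTop tendsto_id
  have t1 : Tendsto (fun x : ℝ => 1/2 - 3/x) atTop (nhds (1/2)) := by
    have h : Tendsto (fun x : ℝ => 1/2 - 3/x) atTop (nhds (1/2 - 0)) :=
      Tendsto.sub tendsto_const_nhds h3
    rwa [sub_zero] at h
  have t2 : Tendsto (fun x : ℝ => 1/2 + 3/x) atTop (nhds (1/2)) := by
    have h : Tendsto (fun x : ℝ => 1/2 + 3/x) atTop (nhds (1/2 + 0)) :=
      Tendsto.add tendsto_const_nhds h3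
    rwa [add_zero] at h
  exact tendsto_of_tendsto_of_tendsto_of_le_of_le' t1 t2 lo hi
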